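/- Let σ > 0, c₁ ≠ 0, γ ≠ 0, η ≠ 0, and set β = (c₁+1)/c₁ and κ = σ²/(2c₁²). Let W : ℝ → ℝ be twice differentiable with W''(z) − β·W'(z) ≠ 0 for all z, and define u(S,t) = η·t + W(ln S − γt) for S > 0. Then: (a) u solves the special-model PDE u_t + (1/2)·σ²S²·u_SS·u_S² / (u_S − c₁·S·u_SS)² = 0 if and only if W satisfies η − γ·W' + κ·(W'' − W')·(W')² / (W'' − β·W')² = 0 on ℝ; and (b) this holds if and only if Y = W' satisfies the first-order ODE (Y')²·(η − γY) + Y'·Y·(Y(2βγ + κ) − 2βη) − Y²·(Y(β²γ + κ) − β²η) = 0 on ℝ. (This is the reduction of the special model under the subgroup H₄, with invariants z = ln S − γt, W = u − ηt.) -/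

import Mathlib

open Real Set

/-- Partial derivative of `u(S,t)` with respect to `S`. -/
noncomputable def pS (u : ℝ → ℝ → ℝ) (S t : ℝ) : ℝ := deriv (fun s => u s t) S

/-- Second partial derivative of `u(S,t)` with respect to `S`. -/
noncomputable def pSS (u : ℝ → ℝ → ℝ) (S t : ℝ) : ℝ := deriv (fun s => pS u s t) S

/-- Partial derivative of `u(S,t)` with respect to `t`. -/
noncomputable def pt (u : ℝ → ℝ → ℝ) (S t : ℝ) : ℝ := deriv (fun τ => u S τ) t

lemma algebra_step (σ c₁ β κ S A B η γ : ℝ) (hS : S ≠ 0) (hc₁ : c₁ ≠ 0)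
    (hb : c₁ * β = c₁ + 1) (hκ : κ = σ ^ 2 / (2 * c₁ ^ 2)) (hd : B - β * A ≠ 0) :
    (η - γ * A) + (1 / 2) * σ ^ 2 * S ^ 2 * ((B - A) * (S ^ 2)⁻¹) * (A * S⁻¹) ^ 2 /
      (A * S⁻¹ - c₁ * S * ((B - A) * (S ^ 2)⁻¹)) ^ 2
    = η - γ * A + κ * (B - A) * A ^ 2 / (B - β * A) ^ 2 := by
  have hd2 : A * S⁻¹ - c₁ * S * ((B - A) * (S ^ 2)⁻¹) = -(c₁ * (B - β * A)) * S⁻¹ := by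
    field_simp
    linear_combination (-A) * hb
  rw [hd2, hκ]
  field_simp

theorem special_model_reduction_H4
    (σ c₁ γ η β κ : ℝ) (hσ : 0 < σ) (hc₁ : c₁ ≠ 0) (hγ : γ ≠ 0) (hη : η ≠ 0)
    (hβ : β = (c₁ + 1) / c₁) (hκ : κ = σ ^ 2 / (2 * c₁ ^ 2))
    (W : ℝ → ℝ) (hW : Differentiable ℝ W) (hW' : Differentiable ℝ (deriv W))
    (hden : ∀ z : ℝ, deriv (deriv W) z - β * deriv W z ≠ 0)
    (u : ℝ → ℝ → ℝ)
    (hu : u = fun S t => η * t + W (Real.log S - γ * t)) :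
    ((∀ S ∈ Set.Ioi (0 : ℝ), ∀ t : ℝ,
      pt u S t + (1 / 2) * σ ^ 2 * S ^ 2 * pSS u S t * (pS u S t) ^ 2 /
        (pS u S t - c₁ * S * pSS u S t) ^ 2 = 0)
    ↔
    (∀ z : ℝ,
      η - γ * deriv W z +
        κ * (deriv (deriv W) z - deriv W z) * (deriv W z) ^ 2 /
          (deriv (deriv W) z - β * deriv W z) ^ 2 = 0)) ∧
    ((∀ z : ℝ,
      η - γ * deriv W z +
        κ * (deriv (deriv W) z - deriv W z) * (deriv W z) ^ 2 /
          (deriv (deriv W) z - β * deriv W z) ^ 2 = 0)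
    ↔
    (∀ z : ℝ,
      (deriv (deriv W) z) ^ 2 * (η - γ * deriv W z) +
        deriv (deriv W) z * deriv W z *
          (deriv W z * (2 * β * γ + κ) - 2 * β * η) -
        (deriv W z) ^ 2 *
          (deriv W z * (β ^ 2 * γ + κ) - β ^ 2 * η) = 0)) := by
  subst hu
  have hb : c₁ * β = c₁ + 1 := by rw [hβ]; field_simp
  -- first partial in S
  have hpS : ∀ t : ℝ, ∀ S : ℝ, 0 < S →
      pS (fun S t => η * t + W (Real.log S - γ * t)) S t
        = deriv W (Real.log S - γ * t) * S⁻¹ := by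
    intro t S hS
    have h1 : HasDerivAt (fun s : ℝ => Real.log s - γ * t) S⁻¹ S :=
      (Real.hasDerivAt_log hS.ne').sub_const _
    exact (((hW (Real.log S - γ * t)).hasDerivAt.comp S h1).const_add (η * t)).deriv
  -- second partial in S
  have hpSS : ∀ t : ℝ, ∀ S : ℝ, 0 < S →
      pSS (fun S t => η * t + W (Real.log S - γ * t)) S t
        = (deriv (deriv W) (Real.log S - γ * t) - deriv W (Real.log S - γ * t)) * (S ^ 2)⁻¹ := by
    intro t S hS
    have hev : (fun s => pS (fun S t => η * t + W (Real.log S - γ * t)) s t)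
        =ᶠ[nhds S] fun s => deriv W (Real.log s - γ * t) * s⁻¹ := by
      filter_upwards [isOpen_Ioi.mem_nhds hS] with s hs
      exact hpS t s hs
    rw [pSS, hev.deriv_eq]
    have h1 : HasDerivAt (fun s : ℝ => Real.log s - γ * t) S⁻¹ S :=
      (Real.hasDerivAt_log hS.ne').sub_const _
    have h2 : HasDerivAt (fun s : ℝ => deriv W (Real.log s - γ * t))
        (deriv (deriv W) (Real.log S - γ * t) * S⁻¹) S :=
      HasDerivAt.comp (h₂ := deriv W) S (hW' (Real.log S - γ * t)).hasDerivAt h1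
    have h3 : HasDerivAt (fun s : ℝ => (s : ℝ)⁻¹) (-(S ^ 2)⁻¹) S := hasDerivAt_inv hS.ne'
    rw [HasDerivAt.deriv (f := fun s => deriv W (Real.log s - γ * t) * s⁻¹) (h2.mul h3)]
    field_simp
    ring
  -- partial in t
  have hpt : ∀ S t : ℝ,
      pt (fun S t => η * t + W (Real.log S - γ * t)) S t
        = η - γ * deriv W (Real.log S - γ * t) := by
    intro S t
    have h1 : HasDerivAt (fun τ : ℝ => Real.log S - γ * τ) (-γ) t := by
      simpa using ((hasDerivAt_id t).const_mul γ).const_sub (Real.log S)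
    have h2 : HasDerivAt (fun τ : ℝ => η * τ) η t := by
      simpa using (hasDerivAt_id t).const_mul η
    have h3 : HasDerivAt (fun τ : ℝ => η * τ + W (Real.log S - γ * τ))
        (η + deriv W (Real.log S - γ * t) * -γ) t :=
      h2.add ((hW _).hasDerivAt.comp t h1)
    rw [pt, h3.deriv]; ring
  -- key identity: LHS of PDE equals the reduced expression
  have key : ∀ S : ℝ, 0 < S → ∀ t : ℝ,
      pt (fun S t => η * t + W (Real.log S - γ * t)) S t +
        (1 / 2) * σ ^ 2 * S ^ 2 * pSS (fun S t => η * t + W (Real.log S - γ * t)) S t *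
          (pS (fun S t => η * t + W (Real.log S - γ * t)) S t) ^ 2 /
        (pS (fun S t => η * t + W (Real.log S - γ * t)) S t -
          c₁ * S * pSS (fun S t => η * t + W (Real.log S - γ * t)) S t) ^ 2
      = η - γ * deriv W (Real.log S - γ * t) +
          κ * (deriv (deriv W) (Real.log S - γ * t) - deriv W (Real.log S - γ * t)) *
            (deriv W (Real.log S - γ * t)) ^ 2 /
          (deriv (deriv W) (Real.log S - γ * t) - β * deriv W (Real.log S - γ * t)) ^ 2 := by
    intro S hS t
    rw [hpS t S hS, hpSS t S hS, hpt S t]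
    exact algebra_step σ c₁ β κ S (deriv W (Real.log S - γ * t))
      (deriv (deriv W) (Real.log S - γ * t)) η γ hS.ne' hc₁ hb hκ (hden _)
  constructor
  · constructor
    · intro h z
      have := h (Real.exp z) (Set.mem_Ioi.mpr (Real.exp_pos z)) 0
      rw [key (Real.exp z) (Real.exp_pos z) 0] at this
      simpa [Real.log_exp] using this
    · intro h S hS t
      rw [key S (Set.mem_Ioi.mp hS) t]
      exact h _
  · have hzeq : ∀ z : ℝ,
        (η - γ * deriv W z +
          κ * (deriv (deriv W) z - deriv W z) * (deriv W z) ^ 2 /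
            (deriv (deriv W) z - β * deriv W z) ^ 2 = 0)
        ↔
        ((deriv (deriv W) z) ^ 2 * (η - γ * deriv W z) +
          deriv (deriv W) z * deriv W z *
            (deriv W z * (2 * β * γ + κ) - 2 * β * η) -
          (deriv W z) ^ 2 *
            (deriv W z * (β ^ 2 * γ + κ) - β ^ 2 * η) = 0) := by
      intro z
      set Y := deriv W z with hY
      set Y' := deriv (deriv W) z with hY'
      have hd : Y' - β * Y ≠ 0 := hden z
      have hrw : η - γ * Y + κ * (Y' - Y) * Y ^ 2 / (Y' - β * Y) ^ 2
          = ((η - γ * Y) * (Y' - β * Y) ^ 2 + κ * (Y' - Y) * Y ^ 2) / (Y' - β * Y) ^ 2 := by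
        rw [add_div' _ _ _ (pow_ne_zero 2 hd)]
      rw [hrw, div_eq_zero_iff]
      constructor
      · rintro (h | h)
        · linear_combination h
        · exact absurd h (pow_ne_zero 2 hd)
      · intro h
        left
        linear_combination h
    constructor
    · intro h z; exact (hzeq z).mp (h z)
    · intro h z; exact (hzeq z).mpr (h z)
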